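/- Let D be a PID, p prime with residue field of size q, N ≥ 2, and f_1,…,f_q ∈ D[x] monic polynomials, irreducible in K[x], satisfying: v_p(f_i(c)) ≥ N−1 if p | (c−a_i) and i < q; v_p(f_q(c)) ≥ N if p | (c−a_q); v_p(f_i(c)) = 0 if p ∤ (c−a_i); where a_1,…,a_q is a complete residue system mod p. Then for all c ∈ D, v_p(f_1(c)^N ··· f_{q−1}(c)^N · f_q(c)^{N−1}) ≥ N(N−1), so (∏_{i<q} f_i^N) f_q^{N−1} / p^{N(N−1)} ∈ Int(D). -/

import Mathlib

open Polynomial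

/-- Given a complete residue system `a_1, …, a_{q+1}` mod `p` and monic
polynomials `f_1, …, f_{q+1}`, irreducible in `K[x]`, with `v_p(f_i(c)) ≥ N-1`
whenever `p ∣ c - a_i` (`i ≤ q`), `v_p(f_{q+1}(c)) ≥ N` whenever `p ∣ c - a_{q+1}`,
and `v_p(f_i(c)) = 0` whenever `p ∤ c - a_i`, one has
`v_p(f_1(c)^N ⋯ f_q(c)^N · f_{q+1}(c)^{N-1}) ≥ N(N-1)` for all `c`, so that
`(∏_{i ≤ q} f_i^N) f_{q+1}^{N-1} / p^{N(N-1)}` is integer-valued. -/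
theorem stmt16 (D K : Type*) [CommRing D] [IsDomain D] [IsPrincipalIdealRing D]
    [Field K] [Algebra D K] [IsFractionRing D K]
    (p : D) (hp : Prime p) (N : ℕ) (hN : 2 ≤ N)
    (q : ℕ) (a : Fin (q + 1) → D)
    (ha : Function.Bijective fun i => Ideal.Quotient.mk (Ideal.span {p}) (a i))
    (f : Fin (q + 1) → Polynomial D)
    (hmonic : ∀ i, (f i).Monic)
    (hirr : ∀ i, Irreducible ((f i).map (algebraMap D K)))
    (h1 : ∀ (i : Fin q) (c : D), p ∣ (c - a i.castSucc) →
      p ^ (N - 1) ∣ (f i.castSucc).eval c)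
    (h2 : ∀ c : D, p ∣ (c - a (Fin.last q)) → p ^ N ∣ (f (Fin.last q)).eval c)
    (h3 : ∀ (i : Fin (q + 1)) (c : D), ¬ p ∣ (c - a i) → ¬ p ∣ (f i).eval c) :
    (∀ c : D, p ^ (N * (N - 1)) ∣
        (∏ i : Fin q, (f i.castSucc).eval c) ^ N * ((f (Fin.last q)).eval c) ^ (N - 1)) ∧
    (∀ b : D, ∃ d : D,
      (Polynomial.C (((algebraMap D K p) ^ (N * (N - 1)))⁻¹) *
        ((∏ i : Fin q, (f i.castSucc).map (algebraMap D K)) ^ N *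
          ((f (Fin.last q)).map (algebraMap D K)) ^ (N - 1))).eval (algebraMap D K b)
        = algebraMap D K d) := by
  have key : ∀ c : D, p ^ (N * (N - 1)) ∣
      (∏ i : Fin q, (f i.castSucc).eval c) ^ N * ((f (Fin.last q)).eval c) ^ (N - 1) := by
    intro c
    obtain ⟨i, hi⟩ := ha.2 (Ideal.Quotient.mk (Ideal.span {p}) c)
    have hdvd : p ∣ c - a i := by
      have h := (Ideal.Quotient.eq).mp hi
      rw [Ideal.mem_span_singleton] at h
      have := dvd_neg.mpr h
      simpa using this
    rcases eq_or_ne i (Fin.last q) with h | h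
    · subst h
      have := h2 c hdvd
      refine dvd_mul_of_dvd_right ?_ _
      have : (p ^ N) ^ (N - 1) ∣ ((f (Fin.last q)).eval c) ^ (N - 1) :=
        pow_dvd_pow_of_dvd this _
      rwa [← pow_mul] at this
    · obtain ⟨j, rfl⟩ := Fin.exists_castSucc_eq.mpr h
      have hj := h1 j c hdvd
      refine dvd_mul_of_dvd_left ?_ _
      have hprod : p ^ (N - 1) ∣ ∏ i : Fin q, (f i.castSucc).eval c :=
        hj.trans (Finset.dvd_prod_of_mem _ (Finset.mem_univ j))
      have : (p ^ (N - 1)) ^ N ∣ (∏ i : Fin q, (f i.castSucc).eval c) ^ N :=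
        pow_dvd_pow_of_dvd hprod _
      rwa [← pow_mul, Nat.mul_comm] at this
  refine ⟨key, fun b => ?_⟩
  obtain ⟨d, hd⟩ := key b
  refine ⟨d, ?_⟩
  have hp0 : algebraMap D K p ≠ 0 := by
    simpa using (map_ne_zero_iff _ (IsFractionRing.injective D K)).mpr hp.ne_zero
  have hpow : ((algebraMap D K p) ^ (N * (N - 1))) ≠ 0 := pow_ne_zero _ hp0
  simp only [eval_mul, eval_C, eval_pow, eval_prod, Polynomial.eval_map,
    Polynomial.eval₂_at_apply]
  rw [← map_prod]
  rw [show ((algebraMap D K) (∏ i : Fin q, eval b (f i.castSucc))) ^ N *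
      ((algebraMap D K) (eval b (f (Fin.last q)))) ^ (N - 1)
      = algebraMap D K (p ^ (N * (N - 1)) * d) by rw [← hd]; push_cast [map_mul, map_pow]; ring]
  rw [map_mul, map_pow, inv_mul_cancel_left₀ hpow]
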